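/- Let δ > 0 and Q = [0,1]×[0,δ]. Let χ : ℝ² → {0,1} be a measurable Q-periodic indicator function of the inclusion phase, let C_mat and C_inc be constant fourth-order tensors on ℝ², each symmetric (C_{ijkl} = C_{klij}) and positive semidefinite, let 𝒦 > 0, and define the degradation function g(𝔡) = (1−𝔡)² + 𝒦 and the damaged microscopic tensor field Cᵐ(ξ, 𝔡) = (1−χ(ξ)) g(𝔡) C_mat + χ(ξ) C_inc (damage degrades only the matrix, the inclusion stays undamaged). Fix a constant 2×2 matrix H and suppose that for each 𝔡 ∈ [0,1] there is a continuously differentiable Q-periodic corrector w(·, 𝔡) : ℝ² → ℝ² solving the weak cell problem ∫_Q Cᵐ_{ijkl}(ξ, 𝔡) (H_{kl} + ∂w_k/∂ξ_l)(∂φ_i/∂ξ_j) dξ = 0 for all continuously differentiable Q-periodic φ. Then the homogenized energy is monotonically nonincreasing in the phase field: for all 0 ≤ 𝔡₁ ≤ 𝔡₂ ≤ 1, ∫_Q Cᵐ_{ijkl}(ξ, 𝔡₂)(H_{ij} + ∂w_i/∂ξ_j(ξ,𝔡₂))(H_{kl} + ∂w_k/∂ξ_l(ξ,𝔡₂)) dξ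 ≤ ∫_Q Cᵐ_{ijkl}(ξ, 𝔡₁)(H_{ij} + ∂w_i/∂ξ_j(ξ,𝔡₁))(H_{kl} + ∂w_k/∂ξ_l(ξ,𝔡₁)) dξ. -/

import Mathlib

open MeasureTheory

noncomputable section

/-- `g` is periodic with respect to the cell `Q = [0,1] × [0,δ]`. -/
def QPer {α : Type*} (δ : ℝ) (g : (Fin 2 → ℝ) → α) : Prop :=
  (∀ ξ, g (ξ + Pi.single 0 1) = g ξ) ∧ (∀ ξ, g (ξ + Pi.single 1 δ) = g ξ)

/-- The periodicity cell `Q = [0,1] × [0,δ] ⊂ ℝ²`. -/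
def cell (δ : ℝ) : Set (Fin 2 → ℝ) := Set.Icc 0 ![1, δ]

/-- Double contraction `C_{ijkl} A_{ij} B_{kl}`. -/
def contr (C : Fin 2 → Fin 2 → Fin 2 → Fin 2 → ℝ) (A B : Fin 2 → Fin 2 → ℝ) : ℝ :=
  ∑ i, ∑ j, ∑ k, ∑ l, C i j k l * A i j * B k l

/-- Displacement gradient `(∇v)_{kl}(ξ) = ∂v_k/∂ξ_l (ξ)`. -/
def sgrad (v : (Fin 2 → ℝ) → (Fin 2 → ℝ)) (ξ : Fin 2 → ℝ) : Fin 2 → Fin 2 → ℝ :=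
  fun k l => fderiv ℝ (fun ζ => v ζ k) ξ (Pi.single l 1)

lemma contr_symm' (C : Fin 2 → Fin 2 → Fin 2 → Fin 2 → ℝ)
    (hC : ∀ i j k l, C i j k l = C k l i j) (A B : Fin 2 → Fin 2 → ℝ) :
    contr C A B = contr C B A := by
  simp only [contr, Fin.sum_univ_two]
  linear_combination (A 0 0 * B 0 0) * hC 0 0 0 0 +
    (A 0 0 * B 0 1) * hC 0 0 0 1 +
    (A 0 0 * B 1 0) * hC 0 0 1 0 +
    (A 0 0 * B 1 1) * hC 0 0 1 1 +
    (A 0 1 * B 0 0) * hC 0 1 0 0 +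
    (A 0 1 * B 0 1) * hC 0 1 0 1 +
    (A 0 1 * B 1 0) * hC 0 1 1 0 +
    (A 0 1 * B 1 1) * hC 0 1 1 1 +
    (A 1 0 * B 0 0) * hC 1 0 0 0 +
    (A 1 0 * B 0 1) * hC 1 0 0 1 +
    (A 1 0 * B 1 0) * hC 1 0 1 0 +
    (A 1 0 * B 1 1) * hC 1 0 1 1 +
    (A 1 1 * B 0 0) * hC 1 1 0 0 +
    (A 1 1 * B 0 1) * hC 1 1 0 1 +
    (A 1 1 * B 1 0) * hC 1 1 1 0 +
    (A 1 1 * B 1 1) * hC 1 1 1 1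

lemma contr_expand' (C : Fin 2 → Fin 2 → Fin 2 → Fin 2 → ℝ)
    (hC : ∀ i j k l, C i j k l = C k l i j) (A B : Fin 2 → Fin 2 → ℝ) :
    contr C (fun i j => A i j + B i j) (fun i j => A i j + B i j)
      = contr C A A + 2 * contr C B A + contr C B B := by
  have h := contr_symm' C hC A B
  simp only [contr, Fin.sum_univ_two] at h ⊢
  linear_combination h

lemma continuous_contr_of (C : Fin 2 → Fin 2 → Fin 2 → Fin 2 → ℝ)
    (A B : (Fin 2 → ℝ) → Fin 2 → Fin 2 → ℝ)
    (hA : ∀ i j, Continuous fun ξ => A ξ i j) (hB : ∀ i j, Continuous fun ξ => B ξ i j) :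
    Continuous fun ξ => contr C (A ξ) (B ξ) := by
  unfold contr
  exact continuous_finset_sum _ fun i _ => continuous_finset_sum _ fun j _ =>
    continuous_finset_sum _ fun k _ => continuous_finset_sum _ fun l _ =>
      (continuous_const.mul (hA i j)).mul (hB k l)

/-- Monotonicity of the homogenized energy in the phase field: only the matrix is
degraded by `g(𝔡) = (1-𝔡)² + 𝒦`, the inclusion (indicator `χ`) stays undamaged, so
the homogenized energy of the corrector is nonincreasing in `𝔡 ∈ [0,1]`. -/
theorem homogenized_energy_nonincreasing_in_damage (δ : ℝ) (hδ : 0 < δ)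
    (χ : (Fin 2 → ℝ) → ℝ) (hχmeas : Measurable χ)
    (hχ01 : ∀ ξ, χ ξ = 0 ∨ χ ξ = 1) (hχper : QPer δ χ)
    (Cmat Cinc : Fin 2 → Fin 2 → Fin 2 → Fin 2 → ℝ)
    (hCmatsym : ∀ i j k l, Cmat i j k l = Cmat k l i j)
    (hCincsym : ∀ i j k l, Cinc i j k l = Cinc k l i j)
    (hCmatpsd : ∀ E : Fin 2 → Fin 2 → ℝ, 0 ≤ contr Cmat E E)
    (hCincpsd : ∀ E : Fin 2 → Fin 2 → ℝ, 0 ≤ contr Cinc E E)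
    (K : ℝ) (hK : 0 < K)
    (g : ℝ → ℝ) (hg : ∀ d, g d = (1 - d) ^ 2 + K)
    (Cm : (Fin 2 → ℝ) → ℝ → Fin 2 → Fin 2 → Fin 2 → Fin 2 → ℝ)
    (hCm : ∀ ξ d i j k l,
      Cm ξ d i j k l = (1 - χ ξ) * g d * Cmat i j k l + χ ξ * Cinc i j k l)
    (H : Fin 2 → Fin 2 → ℝ)
    (w : (Fin 2 → ℝ) → ℝ → (Fin 2 → ℝ))
    (hw : ∀ d ∈ Set.Icc (0 : ℝ) 1,
      ContDiff ℝ 1 (fun ξ => w ξ d) ∧ QPer δ (fun ξ => w ξ d) ∧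
      ∀ φ : (Fin 2 → ℝ) → (Fin 2 → ℝ), ContDiff ℝ 1 φ → QPer δ φ →
        (∫ ξ in cell δ, contr (Cm ξ d) (sgrad φ ξ)
          (fun k l => H k l + sgrad (fun ζ => w ζ d) ξ k l)) = 0) :
    ∀ d1 d2 : ℝ, 0 ≤ d1 → d1 ≤ d2 → d2 ≤ 1 →
      (∫ ξ in cell δ, contr (Cm ξ d2)
          (fun i j => H i j + sgrad (fun ζ => w ζ d2) ξ i j)
          (fun k l => H k l + sgrad (fun ζ => w ζ d2) ξ k l)) ≤
        ∫ ξ in cell δ, contr (Cm ξ d1)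
          (fun i j => H i j + sgrad (fun ζ => w ζ d1) ξ i j)
          (fun k l => H k l + sgrad (fun ζ => w ζ d1) ξ k l) := by
  intro d1 d2 hd1 hd12 hd2
  have hd1m : d1 ∈ Set.Icc (0:ℝ) 1 := ⟨hd1, le_trans hd12 hd2⟩
  have hd2m : d2 ∈ Set.Icc (0:ℝ) 1 := ⟨le_trans hd1 hd12, hd2⟩
  obtain ⟨hw1cd, hw1per, _⟩ := hw d1 hd1m
  obtain ⟨hw2cd, hw2per, hcorr2⟩ := hw d2 hd2m
  -- symmetry of the damaged tensor
  have hCmsym : ∀ ξ d i j k l, Cm ξ d i j k l = Cm ξ d k l i j := by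
    intro ξ d i j k l
    rw [hCm, hCm, hCmatsym, hCincsym]
  -- χ bounds
  have hχ0 : ∀ ξ, 0 ≤ χ ξ := fun ξ => by rcases hχ01 ξ with h | h <;> simp [h]
  have hχ1 : ∀ ξ, χ ξ ≤ 1 := fun ξ => by rcases hχ01 ξ with h | h <;> simp [h]
  -- splitting of the quadratic form
  have hsplit : ∀ ξ d (A B : Fin 2 → Fin 2 → ℝ),
      contr (Cm ξ d) A B = (1 - χ ξ) * (g d * contr Cmat A B) + χ ξ * contr Cinc A B := by
    intro ξ d A B
    simp only [contr, hCm, Fin.sum_univ_two]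
    ring
  have hgpos : ∀ d : ℝ, 0 < g d := by
    intro d; rw [hg]; nlinarith [sq_nonneg (1 - d)]
  have hgmono : g d2 ≤ g d1 := by
    rw [hg, hg]; nlinarith
  -- pointwise psd and monotonicity
  have hpsd : ∀ ξ d (E : Fin 2 → Fin 2 → ℝ), 0 ≤ contr (Cm ξ d) E E := by
    intro ξ d E
    rw [hsplit]
    have h1 := hCmatpsd E
    have h2 := hCincpsd E
    have hp1 : 0 ≤ (1 - χ ξ) * (g d * contr Cmat E E) :=
      mul_nonneg (by linarith [hχ1 ξ]) (mul_nonneg (hgpos d).le h1)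
    have hp2 : 0 ≤ χ ξ * contr Cinc E E := mul_nonneg (hχ0 ξ) h2
    linarith
  have hmono : ∀ ξ (E : Fin 2 → Fin 2 → ℝ),
      contr (Cm ξ d2) E E ≤ contr (Cm ξ d1) E E := by
    intro ξ E
    rw [hsplit, hsplit]
    have h1 := hCmatpsd E
    have key : 0 ≤ (1 - χ ξ) * (contr Cmat E E * (g d1 - g d2)) :=
      mul_nonneg (by linarith [hχ1 ξ]) (mul_nonneg h1 (by linarith))
    nlinarith [key]
  -- the corrector fields and their difference
  set w1 : (Fin 2 → ℝ) → Fin 2 → ℝ := fun ξ => w ξ d1 with hw1def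
  set w2 : (Fin 2 → ℝ) → Fin 2 → ℝ := fun ξ => w ξ d2 with hw2def
  set ψ : (Fin 2 → ℝ) → Fin 2 → ℝ := fun ξ => w ξ d1 - w ξ d2 with hψdef
  have hψcd : ContDiff ℝ 1 ψ := hw1cd.sub hw2cd
  have hψper : QPer δ ψ :=
    ⟨fun ξ => congrArg₂ (· - ·) (hw1per.1 ξ) (hw2per.1 ξ),
     fun ξ => congrArg₂ (· - ·) (hw1per.2 ξ) (hw2per.2 ξ)⟩
  -- gradients
  have hdiffk : ∀ (v : (Fin 2 → ℝ) → Fin 2 → ℝ), ContDiff ℝ 1 v → ∀ (k : Fin 2) ξ,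
      DifferentiableAt ℝ (fun ζ => v ζ k) ξ :=
    fun v hv k ξ => ((contDiff_pi.mp hv k).differentiable one_ne_zero).differentiableAt
  have hψgrad : ∀ ξ k l, sgrad ψ ξ k l = sgrad w1 ξ k l - sgrad w2 ξ k l := by
    intro ξ k l
    have h1 := hdiffk w1 hw1cd k ξ
    have h2 := hdiffk w2 hw2cd k ξ
    have : (fun ζ => ψ ζ k) = fun ζ => (fun ζ => w1 ζ k) ζ - (fun ζ => w2 ζ k) ζ := rfl
    simp only [sgrad, this, fderiv_fun_sub h1 h2, ContinuousLinearMap.sub_apply]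
  -- continuity of gradient components
  have hsgc : ∀ (v : (Fin 2 → ℝ) → Fin 2 → ℝ), ContDiff ℝ 1 v → ∀ (k l : Fin 2),
      Continuous fun ξ => sgrad v ξ k l := by
    intro v hv k l
    have h1 : Continuous (fderiv ℝ fun ζ => v ζ k) :=
      (contDiff_pi.mp hv k).continuous_fderiv one_ne_zero
    exact h1.clm_apply continuous_const
  -- strain fields
  set E1 : (Fin 2 → ℝ) → Fin 2 → Fin 2 → ℝ := fun ξ i j => H i j + sgrad w1 ξ i j with hE1def
  set E2 : (Fin 2 → ℝ) → Fin 2 → Fin 2 → ℝ := fun ξ i j => H i j + sgrad w2 ξ i j with hE2def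
  have hE1c : ∀ i j, Continuous fun ξ => E1 ξ i j :=
    fun i j => continuous_const.add (hsgc w1 hw1cd i j)
  have hE2c : ∀ i j, Continuous fun ξ => E2 ξ i j :=
    fun i j => continuous_const.add (hsgc w2 hw2cd i j)
  have hDc : ∀ i j, Continuous fun ξ => sgrad ψ ξ i j := fun i j => hsgc ψ hψcd i j
  -- integrability
  have hcomp : IsCompact (cell δ) := isCompact_Icc
  have hInt : ∀ d (A B : (Fin 2 → ℝ) → Fin 2 → Fin 2 → ℝ),
      (∀ i j, Continuous fun ξ => A ξ i j) → (∀ i j, Continuous fun ξ => B ξ i j) →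
      IntegrableOn (fun ξ => contr (Cm ξ d) (A ξ) (B ξ)) (cell δ) := by
    intro d A B hA hB
    have hrw : (fun ξ => contr (Cm ξ d) (A ξ) (B ξ)) =
        fun ξ => (1 - χ ξ) * (g d * contr Cmat (A ξ) (B ξ)) +
          χ ξ * contr Cinc (A ξ) (B ξ) := funext fun ξ => hsplit ξ d (A ξ) (B ξ)
    rw [hrw]
    have hu : IntegrableOn (fun ξ => g d * contr Cmat (A ξ) (B ξ)) (cell δ) :=
      ((continuous_const.mul (continuous_contr_of Cmat A B hA hB)).continuousOn).integrableOn_compact hcomp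
    have hv : IntegrableOn (fun ξ => contr Cinc (A ξ) (B ξ)) (cell δ) :=
      ((continuous_contr_of Cinc A B hA hB).continuousOn).integrableOn_compact hcomp
    have h1 : IntegrableOn (fun ξ => (1 - χ ξ) * (g d * contr Cmat (A ξ) (B ξ))) (cell δ) :=
      hu.bdd_mul (c := 1) ((measurable_const.sub hχmeas).aestronglyMeasurable)
        (Filter.Eventually.of_forall fun ξ => by
          rcases hχ01 ξ with h | h <;> simp [h])
    have h2 : IntegrableOn (fun ξ => χ ξ * contr Cinc (A ξ) (B ξ)) (cell δ) :=
      hv.bdd_mul (c := 1) (hχmeas.aestronglyMeasurable)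
        (Filter.Eventually.of_forall fun ξ => by rcases hχ01 ξ with h | h <;> simp [h])
    exact h1.add h2
  have hf1int := hInt d1 E1 E1 hE1c hE1c
  have hmint := hInt d2 E1 E1 hE1c hE1c
  have hf2int := hInt d2 E2 E2 hE2c hE2c
  have hcrossint : IntegrableOn (fun ξ => contr (Cm ξ d2) (sgrad ψ ξ) (E2 ξ)) (cell δ) :=
    hInt d2 (fun ξ => sgrad ψ ξ) E2 hDc hE2c
  have hquadint : IntegrableOn (fun ξ => contr (Cm ξ d2) (sgrad ψ ξ) (sgrad ψ ξ)) (cell δ) :=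
    hInt d2 (fun ξ => sgrad ψ ξ) (fun ξ => sgrad ψ ξ) hDc hDc
  -- pointwise decomposition of the d2-energy of E1
  have hptid : ∀ ξ, contr (Cm ξ d2) (E1 ξ) (E1 ξ) =
      contr (Cm ξ d2) (E2 ξ) (E2 ξ) + 2 * contr (Cm ξ d2) (sgrad ψ ξ) (E2 ξ) +
        contr (Cm ξ d2) (sgrad ψ ξ) (sgrad ψ ξ) := by
    intro ξ
    have hE : E1 ξ = fun i j => E2 ξ i j + sgrad ψ ξ i j := by
      funext i j
      simp only [hE1def, hE2def, hψgrad ξ i j]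
      ring
    rw [hE]
    exact contr_expand' (Cm ξ d2) (hCmsym ξ d2) (E2 ξ) (sgrad ψ ξ)
  -- the cross term vanishes by the weak cell problem at d2
  have hcross0 : (∫ ξ in cell δ, contr (Cm ξ d2) (sgrad ψ ξ) (E2 ξ)) = 0 := by
    have := hcorr2 ψ hψcd hψper
    convert this using 2
  -- assemble the energy comparison at d2
  have hmsum : (∫ ξ in cell δ, contr (Cm ξ d2) (E1 ξ) (E1 ξ)) =
      (∫ ξ in cell δ, contr (Cm ξ d2) (E2 ξ) (E2 ξ)) +
        2 * (∫ ξ in cell δ, contr (Cm ξ d2) (sgrad ψ ξ) (E2 ξ)) +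
        ∫ ξ in cell δ, contr (Cm ξ d2) (sgrad ψ ξ) (sgrad ψ ξ) := by
    have hre : (fun ξ => contr (Cm ξ d2) (E1 ξ) (E1 ξ)) =
        fun ξ => contr (Cm ξ d2) (E2 ξ) (E2 ξ) +
          (2 * contr (Cm ξ d2) (sgrad ψ ξ) (E2 ξ) +
            contr (Cm ξ d2) (sgrad ψ ξ) (sgrad ψ ξ)) := by
      funext ξ; rw [hptid ξ]; ring
    have i1 : IntegrableOn (fun ξ => 2 * contr (Cm ξ d2) (sgrad ψ ξ) (E2 ξ)) (cell δ) :=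
      hcrossint.const_mul 2
    have i2 : IntegrableOn (fun ξ => 2 * contr (Cm ξ d2) (sgrad ψ ξ) (E2 ξ) +
        contr (Cm ξ d2) (sgrad ψ ξ) (sgrad ψ ξ)) (cell δ) := i1.add hquadint
    rw [hre, integral_add hf2int i2, integral_add i1 hquadint, integral_const_mul]
    ring
  have hquadnn : 0 ≤ ∫ ξ in cell δ, contr (Cm ξ d2) (sgrad ψ ξ) (sgrad ψ ξ) :=
    integral_nonneg fun ξ => hpsd ξ d2 (sgrad ψ ξ)
  have hstep1 : (∫ ξ in cell δ, contr (Cm ξ d2) (E2 ξ) (E2 ξ)) ≤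
      ∫ ξ in cell δ, contr (Cm ξ d2) (E1 ξ) (E1 ξ) := by
    rw [hmsum, hcross0]; linarith
  have hstep2 : (∫ ξ in cell δ, contr (Cm ξ d2) (E1 ξ) (E1 ξ)) ≤
      ∫ ξ in cell δ, contr (Cm ξ d1) (E1 ξ) (E1 ξ) :=
    integral_mono hmint hf1int fun ξ => hmono ξ (E1 ξ)
  exact le_trans hstep1 hstep2
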